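/- arXiv:1706.04158 — 6 statements merged into one kernel-verified Lean document; each statement's English description precedes it below -/
import Mathlib

section
/- Let 0 < α_0 ≤ α < 1, let x ∈ (0, 1/2], and set y = x·(1 + (2x)^α). Then x^{−α_0} − y^{−α_0} ≥ α_0·2^{α_0}·(2x)^{α − α_0} − (α_0·(1+α_0)/2)·2^{α_0}·(2x)^{2α − α_0}. -/
lemma lsv_key_aux (a : ℝ) (ha : 0 < a) {t : ℝ} (ht : 0 ≤ t) :
    (1 + t) ^ (-a) ≤ 1 - a * t + a * (1 + a) / 2 * t ^ 2 := by
  have h1t : (0:ℝ) < 1 + t := by linarith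
  set F : ℝ → ℝ := fun u => (1 + u) ^ a * (1 - a * u + a * (1 + a) / 2 * u ^ 2) with hF
  have hder : ∀ s : ℝ, 0 ≤ s →
      HasDerivAt F ((a + 2) * (a * (1 + a) / 2) * s ^ 2 * (1 + s) ^ (a - 1)) s := by
    intro s hs
    have h1s : (0:ℝ) < 1 + s := by linarith
    have hd1 : HasDerivAt (fun u : ℝ => (1 + u) ^ a) (a * (1 + s) ^ (a - 1)) s := by
      have h := (Real.hasDerivAt_rpow_const (x := 1 + s) (p := a) (Or.inl h1s.ne')).comp s
        ((hasDerivAt_const s (1:ℝ)).add (hasDerivAt_id s))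
      exact h.congr_deriv (by simp)
    have hd2 : HasDerivAt (fun u : ℝ => 1 - a * u + a * (1 + a) / 2 * u ^ 2)
        (-a + a * (1 + a) / 2 * (2 * s)) s := by
      have h1 : HasDerivAt (fun u : ℝ => 1 - a * u) (-a) s := by
        simpa using ((hasDerivAt_id s).const_mul a).const_sub 1
      have h2 : HasDerivAt (fun u : ℝ => a * (1 + a) / 2 * u ^ 2)
          (a * (1 + a) / 2 * (2 * s)) s := by
        simpa [mul_comm] using ((hasDerivAt_pow 2 s).const_mul (a * (1 + a) / 2))
      exact h1.add h2
    have h := hd1.mul hd2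
    have hpow : (1 + s) ^ a = (1 + s) ^ (a - 1) * (1 + s) := by
      rw [← Real.rpow_add_one h1s.ne' (a - 1)]; ring_nf
    refine h.congr_deriv ?_
    rw [hpow]; ring
  have hcont : ContinuousOn F (Set.Ici (0:ℝ)) :=
    fun u hu => ((hder u hu).continuousAt).continuousWithinAt
  have hmono : MonotoneOn F (Set.Ici (0:ℝ)) := by
    apply monotoneOn_of_deriv_nonneg (convex_Ici 0) hcont
    · intro u hu
      rw [interior_Ici] at hu
      have hu' : 0 < u := hu
      exact (hder u hu'.le).differentiableAt.differentiableWithinAt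
    · intro u hu
      rw [interior_Ici] at hu
      have hu' : 0 < u := hu
      rw [(hder u hu'.le).deriv]
      have h1 : (0:ℝ) ≤ (1 + u) ^ (a - 1) := Real.rpow_nonneg (by linarith) _
      have h2 : (0:ℝ) ≤ (a + 2) * (a * (1 + a) / 2) := by nlinarith [sq_nonneg a, mul_pos ha ha]
      positivity
  have hF0 : F 0 = 1 := by simp [hF]
  have hFt : 1 ≤ F t := by
    rw [← hF0]
    exact hmono (Set.self_mem_Ici) ht ht
  have hp : 0 < (1 + t) ^ a := Real.rpow_pos_of_pos h1t a
  rw [Real.rpow_neg h1t.le, ← one_div, div_le_iff₀ hp]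
  calc (1:ℝ) ≤ F t := hFt
    _ = (1 - a * t + a * (1 + a) / 2 * t ^ 2) * (1 + t) ^ a := by rw [hF]; ring

/-- One-step lower estimate for the LSV left branch: for `0 < α₀ ≤ α < 1`, `x ∈ (0, 1/2]`
and `y = x (1 + (2x)^α)`,
`x^(-α₀) - y^(-α₀) ≥ α₀ 2^α₀ (2x)^(α-α₀) - (α₀(1+α₀)/2) 2^α₀ (2x)^(2α-α₀)`. -/
theorem lsv_one_step_lower (α₀ α x : ℝ) (h0 : 0 < α₀) (h01 : α₀ ≤ α) (hα : α < 1)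
    (hx : x ∈ Set.Ioc (0 : ℝ) (1 / 2)) :
    α₀ * 2 ^ α₀ * (2 * x) ^ (α - α₀) - (α₀ * (1 + α₀) / 2) * 2 ^ α₀ * (2 * x) ^ (2 * α - α₀) ≤
      x ^ (-α₀) - (x * (1 + (2 * x) ^ α)) ^ (-α₀) := by
  obtain ⟨hx0, hx2⟩ := hx
  have h2x : (0:ℝ) < 2 * x := by linarith
  set t := (2 * x) ^ α with htdef
  have ht0 : 0 < t := Real.rpow_pos_of_pos h2x α
  have hxna : 0 < x ^ (-α₀) := Real.rpow_pos_of_pos hx0 _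
  have h2a : (0:ℝ) < 2 ^ α₀ := Real.rpow_pos_of_pos (by norm_num) _
  have hsplit : ∀ b : ℝ, (2 * x) ^ (b - α₀) = (2 * x) ^ b * (2 ^ α₀)⁻¹ * x ^ (-α₀) := by
    intro b
    rw [Real.rpow_sub h2x,
      show (2 * x) ^ α₀ = 2 ^ α₀ * x ^ α₀ from Real.mul_rpow (by norm_num) hx0.le,
      Real.rpow_neg hx0.le, div_eq_mul_inv, mul_inv]
    ring
  have hsq : (2 * x) ^ (2 * α) = t ^ 2 := by
    rw [htdef, ← Real.rpow_natCast ((2*x)^α) 2, ← Real.rpow_mul h2x.le]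
    norm_num [mul_comm]
  have e1 : α₀ * 2 ^ α₀ * (2 * x) ^ (α - α₀) = x ^ (-α₀) * (α₀ * t) := by
    rw [hsplit α, ← htdef]; field_simp
  have e2 : (α₀ * (1 + α₀) / 2) * 2 ^ α₀ * (2 * x) ^ (2 * α - α₀)
      = x ^ (-α₀) * (α₀ * (1 + α₀) / 2 * t ^ 2) := by
    rw [hsplit (2 * α), hsq]; field_simp
  have e3 : (x * (1 + t)) ^ (-α₀) = x ^ (-α₀) * (1 + t) ^ (-α₀) :=
    Real.mul_rpow hx0.le (by linarith)
  rw [e1, e2, e3]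
  have hkey := lsv_key_aux α₀ h0 ht0.le
  nlinarith [mul_le_mul_of_nonneg_left hkey hxna.le]
end

section
/- Let 0 < α_0 ≤ α < 1, let x ∈ (0, 1/2], and set y = x·(1 + (2x)^α). Then x^{−α_0} − y^{−α_0} ≤ α_0·2^{α_0}·(2x)^{α − α_0}. -/
/-- One-step upper estimate for the LSV left branch: for `0 < α₀ ≤ α < 1`, `x ∈ (0, 1/2]`
and `y = x (1 + (2x)^α)`, `x^(-α₀) - y^(-α₀) ≤ α₀ 2^α₀ (2x)^(α-α₀)`. -/
theorem lsv_one_step_upper (α₀ α x : ℝ) (h0 : 0 < α₀) (h01 : α₀ ≤ α) (hα : α < 1)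
    (hx : x ∈ Set.Ioc (0 : ℝ) (1 / 2)) :
    x ^ (-α₀) - (x * (1 + (2 * x) ^ α)) ^ (-α₀) ≤ α₀ * 2 ^ α₀ * (2 * x) ^ (α - α₀) := by
  obtain ⟨hx0, hx2⟩ := hx
  set t : ℝ := (2 * x) ^ α with ht
  have h2x : 0 < 2 * x := by linarith
  have ht0 : 0 < t := Real.rpow_pos_of_pos h2x α
  have hα1 : α₀ < 1 := lt_of_le_of_lt h01 hα
  -- (1+t)^α₀ ≤ 1 + α₀ * t (Bernoulli)
  have hbern : (1 + t) ^ α₀ ≤ 1 + α₀ * t :=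
    rpow_one_add_le_one_add_mul_self (by linarith) h0.le hα1.le
  have h1t : (1:ℝ) ≤ (1 + t) ^ α₀ :=
    Real.one_le_rpow (by linarith) h0.le
  -- 1 - (1+t)^(-α₀) ≤ α₀ * t
  have key : 1 - (1 + t) ^ (-α₀) ≤ α₀ * t := by
    rw [Real.rpow_neg (by linarith)]
    have hs : (0:ℝ) < (1 + t) ^ α₀ := by linarith
    have hinv : (1 + t) ^ α₀ * ((1 + t) ^ α₀)⁻¹ = 1 := mul_inv_cancel₀ hs.ne'
    nlinarith [sq_nonneg ((1 + t) ^ α₀ - 1), inv_nonneg.2 hs.le]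
  have hsplit : (x * (1 + t)) ^ (-α₀) = x ^ (-α₀) * (1 + t) ^ (-α₀) :=
    Real.mul_rpow hx0.le (by linarith)
  have hxpos : (0:ℝ) < x ^ (-α₀) := Real.rpow_pos_of_pos hx0 _
  have hrhs : α₀ * 2 ^ α₀ * (2 * x) ^ (α - α₀) = x ^ (-α₀) * (α₀ * t) := by
    have e1 : (2 * x) ^ (α - α₀) = (2 * x) ^ α * ((2:ℝ) ^ (-α₀) * x ^ (-α₀)) := by
      rw [← Real.mul_rpow (by norm_num) hx0.le, sub_eq_add_neg, Real.rpow_add h2x]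
    have e2 : (2:ℝ) ^ α₀ * (2:ℝ) ^ (-α₀) = 1 := by
      rw [← Real.rpow_add (by norm_num : (0:ℝ) < 2)]; norm_num
    rw [e1, ht]
    linear_combination α₀ * (2 * x) ^ α * x ^ (-α₀) * e2
  rw [hsplit, hrhs]
  calc x ^ (-α₀) - x ^ (-α₀) * (1 + t) ^ (-α₀) = x ^ (-α₀) * (1 - (1 + t) ^ (-α₀)) := by ring
    _ ≤ x ^ (-α₀) * (α₀ * t) := by
        exact mul_le_mul_of_nonneg_left key hxpos.le
end

section
/- Let 0 < α_0 ≤ α_1 < 1, let (β_k)_{k≥2} be a sequence in [α_0, α_1], and let (y_k)_{k≥1} be a sequence with y_1 = 1/2, y_k ∈ (0, 1/2], and y_{k−1} = y_k·(1 + (2y_k)^{β_k}) for all k ≥ 2. Then for every ℓ ≥ 1, y_ℓ^{−α_0} ≥ 2^{α_0} + α_0·2^{α_0}·( ∑_{k=2}^ℓ (2y_k)^{β_k − α_0} − ((1+α_0)/2)·∑_{k=2}^ℓ (2y_k)^{2β_k − α_0} ). -/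
open Real

/-- Bernoulli for nonpositive exponents: `1 - q t ≤ (1+t)^(-q)` for `q, t ≥ 0`. -/
lemma bernoulli_neg_aux {q : ℝ} (hq : 0 ≤ q) {t : ℝ} (ht : 0 ≤ t) :
    1 - q * t ≤ (1 + t) ^ (-q) := by
  set h : ℝ → ℝ := fun x => (1 + x) ^ (-q) + q * x with hh
  have hder : ∀ x : ℝ, 0 ≤ x → HasDerivAt h (-q * (1 + x) ^ (-q - 1) * 1 + q) x := by
    intro x hx
    have h1 : HasDerivAt (fun x : ℝ => 1 + x) 1 x := (hasDerivAt_id x).const_add 1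
    have h2 : HasDerivAt (fun y : ℝ => y ^ (-q)) (-q * (1 + x) ^ (-q - 1)) (1 + x) :=
      Real.hasDerivAt_rpow_const (Or.inl (by positivity))
    have := (h2.comp x h1)
    exact (this.add ((hasDerivAt_id x).const_mul q)).congr_deriv (by ring)
  have hmono : MonotoneOn h (Set.Ici (0 : ℝ)) := by
    apply monotoneOn_of_deriv_nonneg (convex_Ici 0)
    · exact continuousOn_of_forall_continuousAt fun x hx => ((hder x hx).continuousAt)
    · intro x hx
      rw [interior_Ici] at hx
      exact ((hder x hx.le).differentiableAt).differentiableWithinAt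
    · intro x hx
      rw [interior_Ici] at hx
      have hx' : (0:ℝ) < x := hx
      rw [(hder x hx'.le).deriv]
      have : (1 + x) ^ (-q - 1) ≤ 1 :=
        Real.rpow_le_one_of_one_le_of_nonpos (by linarith) (by linarith)
      nlinarith
  have := hmono (Set.self_mem_Ici) (Set.mem_Ici.2 ht) ht
  simp only [hh] at this
  simp only [add_zero, mul_zero, Real.rpow_natCast] at this
  rw [Real.one_rpow] at this  -- (1+0)^(-q) = 1
  linarith

/-- Second-order upper Taylor bound: `(1+t)^(-a) ≤ 1 - a t + a(a+1)/2 t²` for `a, t ≥ 0`. -/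
lemma taylor_neg_rpow {a : ℝ} (ha : 0 ≤ a) {t : ℝ} (ht : 0 ≤ t) :
    (1 + t) ^ (-a) ≤ 1 - a * t + a * (a + 1) / 2 * t ^ 2 := by
  set g : ℝ → ℝ := fun x => 1 - a * x + a * (a + 1) / 2 * x ^ 2 - (1 + x) ^ (-a) with hg
  have hder : ∀ x : ℝ, 0 ≤ x →
      HasDerivAt g (-a + a * (a + 1) * x - -a * (1 + x) ^ (-a - 1)) x := by
    intro x hx
    have h1 : HasDerivAt (fun x : ℝ => 1 + x) 1 x := (hasDerivAt_id x).const_add 1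
    have h2 : HasDerivAt (fun y : ℝ => y ^ (-a)) (-a * (1 + x) ^ (-a - 1)) (1 + x) :=
      Real.hasDerivAt_rpow_const (Or.inl (by positivity))
    have h3 : HasDerivAt (fun x : ℝ => (1 + x) ^ (-a)) (-a * (1 + x) ^ (-a - 1)) x := by
      exact (h2.comp x h1).congr_deriv (by ring)
    have h4 : HasDerivAt (fun x : ℝ => 1 - a * x + a * (a + 1) / 2 * x ^ 2)
        (-a + a * (a + 1) * x) x := by
      have := (((hasDerivAt_id x).const_mul a).const_sub 1).add
        (((hasDerivAt_pow 2 x)).const_mul (a * (a + 1) / 2))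
      exact this.congr_deriv (by ring)
    exact h4.sub h3
  have hmono : MonotoneOn g (Set.Ici (0 : ℝ)) := by
    apply monotoneOn_of_deriv_nonneg (convex_Ici 0)
    · exact continuousOn_of_forall_continuousAt fun x hx => ((hder x hx).continuousAt)
    · intro x hx
      rw [interior_Ici] at hx
      exact ((hder x hx.le).differentiableAt).differentiableWithinAt
    · intro x hx
      rw [interior_Ici] at hx
      have hx' : (0:ℝ) < x := hx
      rw [(hder x hx'.le).deriv]
      have hb : 1 - (a + 1) * x ≤ (1 + x) ^ (-(a + 1)) :=
        bernoulli_neg_aux (by linarith) hx'.le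
      have : (1 + x) ^ (-a - 1) = (1 + x) ^ (-(a + 1)) := by ring_nf
      rw [this]
      nlinarith
  have := hmono (Set.self_mem_Ici) (Set.mem_Ici.2 ht) ht
  simp only [hg] at this
  norm_num at this
  linarith

/-- One-step estimate: if `u > 0`, `t = (2u)^b`, then
`(u(1+t))^(-α) + α 2^α ((2u)^(b-α) - (1+α)/2 (2u)^(2b-α)) ≤ u^(-α)`. -/
lemma lsv_step (α : ℝ) (hα : 0 < α) {u : ℝ} (hu : 0 < u) (b : ℝ) :
    (u * (1 + (2 * u) ^ b)) ^ (-α) +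
      α * 2 ^ α * ((2 * u) ^ (b - α) - (1 + α) / 2 * (2 * u) ^ (2 * b - α)) ≤ u ^ (-α) := by
  set t := (2 * u) ^ b with htdef
  have h2u : (0:ℝ) < 2 * u := by linarith
  have ht : 0 < t := Real.rpow_pos_of_pos h2u b
  have hP : 0 < u ^ (-α) := Real.rpow_pos_of_pos hu _
  have e0 : (2 * u : ℝ) ^ (-α) = 2 ^ (-α) * u ^ (-α) := Real.mul_rpow (by norm_num) hu.le
  have einv : (2:ℝ) ^ α * (2:ℝ) ^ (-α) = 1 := by
    rw [← Real.rpow_add two_pos]; simp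
  have e1 : (2:ℝ) ^ α * (2 * u) ^ (b - α) = t * u ^ (-α) := by
    rw [show b - α = b + (-α) by ring, Real.rpow_add h2u, e0, ← htdef]
    linear_combination (t * u ^ (-α)) * einv
  have e2 : (2:ℝ) ^ α * (2 * u) ^ (2 * b - α) = t ^ 2 * u ^ (-α) := by
    have h2b : (2 * u) ^ (2 * b) = t ^ 2 := by
      rw [show (2:ℝ) * b = b * 2 by ring, Real.rpow_mul h2u.le]
      exact_mod_cast Real.rpow_natCast ((2 * u) ^ b) 2
    rw [show 2 * b - α = 2 * b + (-α) by ring, Real.rpow_add h2u, e0, h2b]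
    linear_combination (t ^ 2 * u ^ (-α)) * einv
  have e3 : (u * (1 + t)) ^ (-α) = u ^ (-α) * (1 + t) ^ (-α) :=
    Real.mul_rpow hu.le (by linarith)
  have htay := taylor_neg_rpow hα.le ht.le
  have key : u ^ (-α) * (1 + t) ^ (-α) ≤
      u ^ (-α) * (1 - α * t + α * (α + 1) / 2 * t ^ 2) :=
    mul_le_mul_of_nonneg_left htay hP.le
  have expand : α * 2 ^ α * ((2 * u) ^ (b - α) - (1 + α) / 2 * (2 * u) ^ (2 * b - α)) =
      u ^ (-α) * (α * t) - u ^ (-α) * (α * (α + 1) / 2 * t ^ 2) := by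
    linear_combination α * e1 - (α * (1 + α) / 2) * e2
  rw [e3]
  nlinarith [key, expand]


/-- Iterated lower estimate along a backward-preimage sequence of the LSV family:
if `y 1 = 1/2`, `y k ∈ (0, 1/2]`, `y (k-1) = y k (1 + (2 y k)^(β k))` for `k ≥ 2`,
with parameters `β k ∈ [α₀, α₁] ⊂ (0,1)`, then for every `ℓ ≥ 1`,
`(y ℓ)^(-α₀) ≥ 2^α₀ + α₀ 2^α₀ (∑_{k=2}^ℓ (2 y k)^(β k - α₀)
  - ((1+α₀)/2) ∑_{k=2}^ℓ (2 y k)^(2 β k - α₀))`. -/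
theorem lsv_preimage_iterated_lower (α₀ α₁ : ℝ) (h0 : 0 < α₀) (h01 : α₀ ≤ α₁) (h1 : α₁ < 1)
    (β : ℕ → ℝ) (hβ : ∀ k, 2 ≤ k → β k ∈ Set.Icc α₀ α₁)
    (y : ℕ → ℝ) (hy1 : y 1 = 1 / 2)
    (hy : ∀ k, 1 ≤ k → y k ∈ Set.Ioc (0 : ℝ) (1 / 2))
    (hrec : ∀ k, 2 ≤ k → y (k - 1) = y k * (1 + (2 * y k) ^ β k)) :
    ∀ ℓ, 1 ≤ ℓ →
      (2 : ℝ) ^ α₀ + α₀ * 2 ^ α₀ *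
          ((∑ k ∈ Finset.Icc 2 ℓ, (2 * y k) ^ (β k - α₀)) -
            ((1 + α₀) / 2) * ∑ k ∈ Finset.Icc 2 ℓ, (2 * y k) ^ (2 * β k - α₀)) ≤
        (y ℓ) ^ (-α₀) := by
  intro ℓ hℓ
  induction ℓ, hℓ using Nat.le_induction with
  | base =>
    have : Finset.Icc 2 1 = (∅ : Finset ℕ) := by decide
    rw [this]
    simp [hy1]
    rw [show ((2:ℝ))⁻¹ = (2:ℝ) ^ (-1:ℝ) by simp [Real.rpow_neg_one],
      ← Real.rpow_mul (by norm_num : (0:ℝ) ≤ 2)]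
    norm_num
  | succ n hn ih =>
    have h2n : 2 ≤ n + 1 := by omega
    rw [Finset.sum_Icc_succ_top h2n, Finset.sum_Icc_succ_top h2n]
    have hrecn := hrec (n + 1) h2n
    simp only [Nat.add_sub_cancel] at hrecn
    have hyn1 := hy (n + 1) (by omega)
    have hstep := lsv_step α₀ h0 hyn1.1 (β (n + 1))
    rw [← hrecn] at hstep
    nlinarith [ih, hstep]
end

section
/- Let 0 < α_0 ≤ α_1 < 1, let (β_k)_{k≥2} be a sequence in [α_0, α_1], and let (y_k)_{k≥1} be a sequence with y_1 = 1/2, y_k ∈ (0, 1/2], and y_{k−1} = y_k·(1 + (2y_k)^{β_k}) for all k ≥ 2. Then for every ℓ ≥ 1, y_ℓ^{−α_0} ≤ 2^{α_0} + α_0·2^{α_0}·∑_{k=2}^ℓ (2y_k)^{β_k − α_0}. -/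
/-- Iterated upper estimate along a backward-preimage sequence of the LSV family:
if `y 1 = 1/2`, `y k ∈ (0, 1/2]`, `y (k-1) = y k (1 + (2 y k)^(β k))` for `k ≥ 2`,
with parameters `β k ∈ [α₀, α₁] ⊂ (0,1)`, then for every `ℓ ≥ 1`,
`(y ℓ)^(-α₀) ≤ 2^α₀ + α₀ 2^α₀ ∑_{k=2}^ℓ (2 y k)^(β k - α₀)`. -/
theorem lsv_preimage_iterated_upper (α₀ α₁ : ℝ) (h0 : 0 < α₀) (h01 : α₀ ≤ α₁) (h1 : α₁ < 1)
    (β : ℕ → ℝ) (hβ : ∀ k, 2 ≤ k → β k ∈ Set.Icc α₀ α₁)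
    (y : ℕ → ℝ) (hy1 : y 1 = 1 / 2)
    (hy : ∀ k, 1 ≤ k → y k ∈ Set.Ioc (0 : ℝ) (1 / 2))
    (hrec : ∀ k, 2 ≤ k → y (k - 1) = y k * (1 + (2 * y k) ^ β k)) :
    ∀ ℓ, 1 ≤ ℓ →
      (y ℓ) ^ (-α₀) ≤
        (2 : ℝ) ^ α₀ + α₀ * 2 ^ α₀ * ∑ k ∈ Finset.Icc 2 ℓ, (2 * y k) ^ (β k - α₀) := by
  have hα1 : α₀ ≤ 1 := h01.trans h1.le
  -- key single-step estimate
  have key : ∀ k, 2 ≤ k →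
      (y k) ^ (-α₀) ≤ (y (k - 1)) ^ (-α₀) + α₀ * 2 ^ α₀ * (2 * y k) ^ (β k - α₀) := by
    intro k hk
    have hk1 : 1 ≤ k - 1 := by omega
    have hyk := hy k (by omega)
    have hyk0 : 0 < y k := hyk.1
    set ε : ℝ := (2 * y k) ^ β k with hε
    have hε0 : 0 ≤ ε := Real.rpow_nonneg (by linarith) _
    have h1ε : (0:ℝ) < 1 + ε := by linarith
    have hrec' := hrec k hk
    -- y k ^ (-α₀) = y (k-1) ^ (-α₀) * (1+ε)^α₀
    have heq : (y k) ^ (-α₀) = (y (k-1)) ^ (-α₀) * (1 + ε) ^ α₀ := by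
      rw [hrec', Real.mul_rpow hyk0.le h1ε.le, Real.rpow_neg h1ε.le]
      field_simp
    have hbern : (1 + ε) ^ α₀ ≤ 1 + α₀ * ε :=
      rpow_one_add_le_one_add_mul_self (by linarith) h0.le hα1
    have hyk1 : y k ≤ y (k - 1) := by
      rw [hrec']; nlinarith
    have hmono : (y (k-1)) ^ (-α₀) ≤ (y k) ^ (-α₀) :=
      Real.rpow_le_rpow_of_nonpos hyk0 hyk1 (by linarith)
    have h2y : (y k) ^ (-α₀) = 2 ^ α₀ * (2 * y k) ^ (-α₀) := by
      rw [Real.mul_rpow (by norm_num) hyk0.le, ← mul_assoc, ← Real.rpow_add (by norm_num)]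
      simp
    have hεsplit : ε * (2 * y k) ^ (-α₀) = (2 * y k) ^ (β k - α₀) := by
      rw [hε, ← Real.rpow_add (by linarith)]
      ring_nf
    have hpos : 0 ≤ (y (k-1)) ^ (-α₀) := Real.rpow_nonneg ((hy _ hk1).1.le) _
    calc (y k) ^ (-α₀) = (y (k-1)) ^ (-α₀) * (1 + ε) ^ α₀ := heq
      _ ≤ (y (k-1)) ^ (-α₀) * (1 + α₀ * ε) := by
          exact mul_le_mul_of_nonneg_left hbern hpos
      _ = (y (k-1)) ^ (-α₀) + α₀ * (ε * (y (k-1)) ^ (-α₀)) := by ring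
      _ ≤ (y (k-1)) ^ (-α₀) + α₀ * (ε * (y k) ^ (-α₀)) := by
          have : ε * (y (k-1)) ^ (-α₀) ≤ ε * (y k) ^ (-α₀) :=
            mul_le_mul_of_nonneg_left hmono hε0
          nlinarith
      _ = (y (k-1)) ^ (-α₀) + α₀ * 2 ^ α₀ * (2 * y k) ^ (β k - α₀) := by
          rw [h2y, ← hεsplit]; ring
  intro ℓ hℓ
  induction ℓ with
  | zero => omega
  | succ n ih =>
    rcases Nat.lt_or_ge n 1 with hn | hn
    · interval_cases n
      simp only [Finset.Icc_self, Finset.Icc_eq_empty_of_lt (by norm_num : (2:ℕ) > 1)]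
      rw [hy1]
      rw [show (1:ℝ)/2 = 2⁻¹ by norm_num, ← Real.rpow_neg_one 2, ← Real.rpow_mul (by norm_num)]
      simp
    · have ih' := ih hn
      have hstep := key (n+1) (by omega)
      simp only [Nat.add_sub_cancel] at hstep
      rw [Finset.sum_Icc_succ_top (by omega : 2 ≤ n + 1)]
      calc (y (n+1)) ^ (-α₀)
          ≤ (y n) ^ (-α₀) + α₀ * 2 ^ α₀ * (2 * y (n+1)) ^ (β (n+1) - α₀) := hstep
        _ ≤ (2:ℝ) ^ α₀ + α₀ * 2 ^ α₀ * ∑ k ∈ Finset.Icc 2 n, (2*y k) ^ (β k - α₀)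
              + α₀ * 2 ^ α₀ * (2 * y (n+1)) ^ (β (n+1) - α₀) := by linarith
        _ = _ := by ring
end

section
/- Let 0 < α_0 ≤ α_1 < 1 and let (β_k)_{k≥2} be any sequence in [α_0, α_1]. Let (y_k) be the backward-preimage sequence associated to (β_k), and let (y_k^{(0)}) and (y_k^{(1)}) be the backward-preimage sequences associated to the constant sequences β_k ≡ α_0 and β_k ≡ α_1 respectively. Then for every ℓ ≥ 1, y_ℓ^{(0)} ≤ y_ℓ ≤ y_ℓ^{(1)}. -/
/-- Key monotonicity: `x ↦ x(1+(2x)^β)` increases in `x` and decreases in `β`. -/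
lemma lsv_mono_aux (β₁ β₂ a b : ℝ) (hβ₁ : 0 < β₁) (hle : β₁ ≤ β₂)
    (ha : 0 < a) (hab : a < b) (hb : b ≤ 1 / 2) :
    a * (1 + (2 * a) ^ β₂) < b * (1 + (2 * b) ^ β₁) := by
  have h2a : 0 < 2 * a := by linarith
  have h2a1 : 2 * a ≤ 1 := by linarith
  have step1 : (2 * a) ^ β₂ ≤ (2 * a) ^ β₁ :=
    Real.rpow_le_rpow_of_exponent_ge h2a h2a1 hle
  have step2 : (2 * a) ^ β₁ < (2 * b) ^ β₁ :=
    Real.rpow_lt_rpow (le_of_lt h2a) (by linarith) hβ₁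
  have hpos : 0 < 1 + (2 * a) ^ β₂ := by positivity
  calc a * (1 + (2 * a) ^ β₂) ≤ a * (1 + (2 * a) ^ β₁) := by nlinarith
    _ < b * (1 + (2 * b) ^ β₁) := by nlinarith [Real.rpow_nonneg (le_of_lt h2a) β₁]

/-- Monotone comparison of backward-preimage sequences of the LSV family: for any
parameter sequence `β k ∈ [α₀, α₁] ⊂ (0,1)`, the associated backward-preimage sequence
`y` is squeezed between the ones `y₀`, `y₁` associated to the constant parameters
`α₀` and `α₁`: `y₀ ℓ ≤ y ℓ ≤ y₁ ℓ` for all `ℓ ≥ 1`. -/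
theorem lsv_preimage_comparison (α₀ α₁ : ℝ) (h0 : 0 < α₀) (h01 : α₀ ≤ α₁) (h1 : α₁ < 1)
    (β : ℕ → ℝ) (hβ : ∀ k, 2 ≤ k → β k ∈ Set.Icc α₀ α₁)
    (y y₀ y₁ : ℕ → ℝ)
    (hy1 : y 1 = 1 / 2) (hy : ∀ k, 1 ≤ k → y k ∈ Set.Ioc (0 : ℝ) (1 / 2))
    (hrec : ∀ k, 2 ≤ k → y (k - 1) = y k * (1 + (2 * y k) ^ β k))
    (hy01 : y₀ 1 = 1 / 2) (hy0 : ∀ k, 1 ≤ k → y₀ k ∈ Set.Ioc (0 : ℝ) (1 / 2))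
    (hrec0 : ∀ k, 2 ≤ k → y₀ (k - 1) = y₀ k * (1 + (2 * y₀ k) ^ α₀))
    (hy11 : y₁ 1 = 1 / 2) (hy1' : ∀ k, 1 ≤ k → y₁ k ∈ Set.Ioc (0 : ℝ) (1 / 2))
    (hrec1 : ∀ k, 2 ≤ k → y₁ (k - 1) = y₁ k * (1 + (2 * y₁ k) ^ α₁)) :
    ∀ ℓ, 1 ≤ ℓ → y₀ ℓ ≤ y ℓ ∧ y ℓ ≤ y₁ ℓ := by
  intro ℓ hℓ
  induction ℓ, hℓ using Nat.le_induction with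
  | base => simp [hy1, hy01, hy11]
  | succ n hn ih =>
    have h2 : 2 ≤ n + 1 := by omega
    have hsub : n + 1 - 1 = n := by omega
    have e := hrec (n + 1) h2
    have e0 := hrec0 (n + 1) h2
    have e1 := hrec1 (n + 1) h2
    rw [hsub] at e e0 e1
    have hβm := hβ (n + 1) h2
    have hβpos : 0 < β (n + 1) := lt_of_lt_of_le h0 hβm.1
    have hym := hy (n + 1) (by omega)
    have hy0m := hy0 (n + 1) (by omega)
    have hy1m := hy1' (n + 1) (by omega)
    constructor
    · by_contra hc
      push_neg at hc
      have key : y (n + 1) * (1 + (2 * y (n + 1)) ^ β (n + 1)) <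
          y₀ (n + 1) * (1 + (2 * y₀ (n + 1)) ^ α₀) :=
        lsv_mono_aux α₀ (β (n + 1)) _ _ h0 hβm.1 hym.1 hc hy0m.2
      rw [← e, ← e0] at key
      linarith [ih.1]
    · by_contra hc
      push_neg at hc
      have key : y₁ (n + 1) * (1 + (2 * y₁ (n + 1)) ^ α₁) <
          y (n + 1) * (1 + (2 * y (n + 1)) ^ β (n + 1)) :=
        lsv_mono_aux (β (n + 1)) α₁ _ _ hβpos hβm.2 hy1m.1 hc hym.2
      rw [← e, ← e1] at key
      linarith [ih.2]
end

section
/- Let 0 < α_0 < α_1 < 1 and let (c_k)_{k≥2} and (c'_k)_{k≥2} be sequences of positive reals converging to positive limits. Define, for k ≥ 2, E_k = (1/(α_1−α_0))·∫_{α_0}^{α_1} [ α_0·2^{α_0}·(2c_k·k^{−1/α_0})^{t − α_0} − ((1+α_0)/2)·α_0·2^{α_0}·(2c'_k·k^{−1/α_1})^{2t − α_0} ] dt. Then ((log ℓ)/ℓ)·∑_{k=2}^ℓ E_k → α_0²·2^{α_0}/(α_1 − α_0) as ℓ → ∞. -/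
open Filter

private lemma log_over_self_tendsto :
    Tendsto (fun ℓ : ℕ => Real.log ℓ / (ℓ : ℝ)) atTop (nhds 0) := by
  have h := Real.isLittleO_log_id_atTop.tendsto_div_nhds_zero.comp
    (tendsto_natCast_atTop_atTop (R := ℝ))
  exact h

private lemma log_mul_rpow_tendsto {η : ℝ} (hη : 0 < η) :
    Tendsto (fun ℓ : ℕ => Real.log ℓ * (ℓ : ℝ) ^ (-η)) atTop (nhds 0) := by
  have h := (isLittleO_log_rpow_atTop hη).tendsto_div_nhds_zero.comp
    (tendsto_natCast_atTop_atTop (R := ℝ))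
  refine h.congr fun ℓ => ?_
  simp only [Function.comp]
  rw [Real.rpow_neg (Nat.cast_nonneg ℓ), div_eq_mul_inv]

private lemma sum_inv_log_asymp :
    Tendsto (fun ℓ : ℕ => Real.log ℓ / (ℓ : ℝ) * ∑ k ∈ Finset.Icc 2 ℓ, (Real.log k)⁻¹)
      atTop (nhds 1) := by
  rw [Metric.tendsto_atTop]
  intro ε hε
  set η : ℝ := ε / (2 + ε) with hηdef
  have hη0 : 0 < η := by positivity
  have hη1 : η < 1 := by
    have h2ε : (0:ℝ) < 2 + ε := by linarith
    rw [hηdef, div_lt_one h2ε]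
    linarith
  have hinv : (1 - η)⁻¹ = 1 + ε / 2 := by
    rw [hηdef]
    rw [show (1 : ℝ) - ε / (2 + ε) = 2 / (2 + ε) by field_simp; ring]
    rw [inv_div]; field_simp
  -- the small term tends to zero
  have hg : Tendsto (fun ℓ : ℕ =>
      (Real.log ℓ * (ℓ : ℝ) ^ (-η) + Real.log ℓ / ℓ) * (Real.log 2)⁻¹) atTop (nhds 0) := by
    have := ((log_mul_rpow_tendsto hη0).add log_over_self_tendsto).mul_const (Real.log 2)⁻¹
    simpa using this
  have h2 : ∀ᶠ ℓ : ℕ in atTop,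
      (Real.log ℓ * (ℓ : ℝ) ^ (-η) + Real.log ℓ / ℓ) * (Real.log 2)⁻¹ < ε / 2 := by
    have := hg.eventually_lt_const (by positivity : (0:ℝ) < ε / 2)
    simpa using this
  have h3 : ∀ᶠ ℓ : ℕ in atTop, (1 : ℝ) / ℓ < ε := by
    have : Tendsto (fun ℓ : ℕ => (1:ℝ) / ℓ) atTop (nhds 0) :=
      tendsto_const_nhds.div_atTop (tendsto_natCast_atTop_atTop (R := ℝ))
    exact this.eventually_lt_const hε
  rcases (h2.and (h3.and (eventually_ge_atTop 2))).exists_forall_of_atTop with ⟨N, hN⟩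
  refine ⟨N, fun ℓ hℓ => ?_⟩
  obtain ⟨hsmall, hone, hℓ2⟩ := hN ℓ hℓ
  have hℓ2R : (2 : ℝ) ≤ (ℓ : ℝ) := by exact_mod_cast hℓ2
  have hℓpos : (0 : ℝ) < ℓ := by linarith
  have hlogℓ : 0 < Real.log ℓ := Real.log_pos (by linarith)
  have hlognn : 0 ≤ Real.log ℓ / (ℓ:ℝ) := by positivity
  set A : ℝ := Real.log ℓ / (ℓ : ℝ) * ∑ k ∈ Finset.Icc 2 ℓ, (Real.log k)⁻¹ with hA
  -- lower bound : A ≥ (ℓ-1)/ℓ ≥ 1 - 1/ℓ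
  have hlow : 1 - 1 / (ℓ:ℝ) ≤ A := by
    have hterm : ∀ k ∈ Finset.Icc 2 ℓ, (Real.log ℓ)⁻¹ ≤ (Real.log k)⁻¹ := by
      intro k hk
      obtain ⟨hk2, hkℓ⟩ := Finset.mem_Icc.mp hk
      have hk2R : (2:ℝ) ≤ (k:ℝ) := by exact_mod_cast hk2
      have hkposlog : 0 < Real.log k := Real.log_pos (by linarith)
      exact inv_anti₀ hkposlog (Real.log_le_log (by linarith) (by exact_mod_cast hkℓ))
    have hsum : ((ℓ - 1 : ℕ) : ℝ) * (Real.log ℓ)⁻¹ ≤ ∑ k ∈ Finset.Icc 2 ℓ, (Real.log k)⁻¹ := by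
      have := Finset.card_nsmul_le_sum (Finset.Icc 2 ℓ) (fun k => (Real.log k)⁻¹)
        ((Real.log ℓ)⁻¹) hterm
      have he : ℓ + 1 - 2 = ℓ - 1 := by omega
      rwa [Nat.card_Icc, nsmul_eq_mul, he] at this
    have hcard : ((ℓ - 1 : ℕ) : ℝ) = (ℓ:ℝ) - 1 := by
      have : (1:ℕ) ≤ ℓ := by omega
      push_cast [this]; ring
    have : (Real.log ℓ / ℓ) * (((ℓ:ℝ) - 1) * (Real.log ℓ)⁻¹) ≤ A := by
      rw [hA]
      apply mul_le_mul_of_nonneg_left _ hlognn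
      rw [← hcard]; exact hsum
    calc 1 - 1/(ℓ:ℝ) = (Real.log ℓ / ℓ) * (((ℓ:ℝ) - 1) * (Real.log ℓ)⁻¹) := by
          field_simp
      _ ≤ A := this
  -- upper bound
  set M := ⌈(ℓ:ℝ)^(1-η)⌉₊ with hMdef
  have hℓ1 : (1:ℝ) ≤ ℓ := by linarith
  have h2ne : Real.log 2 ≠ 0 := ne_of_gt (Real.log_pos one_lt_two)
  have h2nn : 0 ≤ (Real.log 2)⁻¹ := inv_nonneg.mpr (Real.log_nonneg one_le_two)
  have hMℓ : M ≤ ℓ := by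
    apply Nat.ceil_le.mpr
    calc (ℓ:ℝ)^(1-η) ≤ (ℓ:ℝ)^(1:ℝ) := Real.rpow_le_rpow_of_exponent_le hℓ1 (by linarith)
      _ = (ℓ:ℝ) := Real.rpow_one _
  have h1M : 1 ≤ M := Nat.ceil_pos.mpr (by positivity)
  have hIcc : Finset.Icc 2 ℓ = Finset.Ioc 1 ℓ := Finset.Icc_add_one_left_eq_Ioc 1 ℓ
  have hsplit := Finset.sum_Ioc_consecutive (fun k : ℕ => (Real.log k)⁻¹) h1M hMℓ
  have hS1 : ∑ k ∈ Finset.Ioc 1 M, (Real.log k)⁻¹ ≤ (M:ℝ) * (Real.log 2)⁻¹ := by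
    have h := Finset.sum_le_card_nsmul (Finset.Ioc 1 M) (fun k => (Real.log (k:ℝ))⁻¹)
      ((Real.log 2)⁻¹) ?_
    · rw [Nat.card_Ioc, nsmul_eq_mul] at h
      refine h.trans (mul_le_mul_of_nonneg_right ?_ h2nn)
      exact_mod_cast Nat.sub_le M 1
    · intro k hk
      obtain ⟨h1k, hkM⟩ := Finset.mem_Ioc.mp hk
      have hk2 : (2:ℝ) ≤ (k:ℝ) := by exact_mod_cast h1k
      exact inv_anti₀ (Real.log_pos one_lt_two) (Real.log_le_log two_pos hk2)
  have hηpos : (0:ℝ) < 1 - η := by linarith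
  have hposd : 0 < (1-η) * Real.log ℓ := mul_pos hηpos hlogℓ
  have hS2 : ∑ k ∈ Finset.Ioc M ℓ, (Real.log k)⁻¹ ≤ (ℓ:ℝ) * ((1-η) * Real.log ℓ)⁻¹ := by
    have h := Finset.sum_le_card_nsmul (Finset.Ioc M ℓ) (fun k => (Real.log (k:ℝ))⁻¹)
      (((1-η) * Real.log ℓ)⁻¹) ?_
    · rw [Nat.card_Ioc, nsmul_eq_mul] at h
      refine h.trans (mul_le_mul_of_nonneg_right ?_ (inv_nonneg.mpr hposd.le))
      exact_mod_cast Nat.sub_le ℓ M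
    · intro k hk
      obtain ⟨hMk, hkℓ⟩ := Finset.mem_Ioc.mp hk
      have hkR : (ℓ:ℝ)^(1-η) ≤ (k:ℝ) := le_trans (Nat.le_ceil _) (by exact_mod_cast hMk.le)
      have hlogk : (1-η) * Real.log ℓ ≤ Real.log k := by
        rw [← Real.log_rpow hℓpos]
        exact Real.log_le_log (by positivity) hkR
      exact inv_anti₀ hposd hlogk
  have hsum : ∑ k ∈ Finset.Icc 2 ℓ, (Real.log k)⁻¹
      ≤ (M:ℝ) * (Real.log 2)⁻¹ + (ℓ:ℝ) * ((1-η) * Real.log ℓ)⁻¹ := by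
    rw [hIcc, ← hsplit]; exact add_le_add hS1 hS2
  have hceil : (M:ℝ) ≤ (ℓ:ℝ)^(1-η) + 1 := (Nat.ceil_lt_add_one (by positivity)).le
  have hpow : (ℓ:ℝ)^(1-η) / (ℓ:ℝ) = (ℓ:ℝ)^(-η) := by
    rw [eq_comm, show -η = (1-η) + (-1) by ring, Real.rpow_add hℓpos, Real.rpow_neg_one,
      div_eq_mul_inv]
  have hup : A ≤ (Real.log ℓ * (ℓ:ℝ)^(-η) + Real.log ℓ / ℓ) * (Real.log 2)⁻¹ + (1-η)⁻¹ := by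
    rw [hA]
    calc Real.log ℓ / (ℓ:ℝ) * ∑ k ∈ Finset.Icc 2 ℓ, (Real.log k)⁻¹
        ≤ Real.log ℓ / (ℓ:ℝ) * ((M:ℝ) * (Real.log 2)⁻¹ + (ℓ:ℝ) * ((1-η) * Real.log ℓ)⁻¹) :=
          mul_le_mul_of_nonneg_left hsum hlognn
      _ ≤ Real.log ℓ / (ℓ:ℝ) * (((ℓ:ℝ)^(1-η) + 1) * (Real.log 2)⁻¹
            + (ℓ:ℝ) * ((1-η) * Real.log ℓ)⁻¹) := by
          apply mul_le_mul_of_nonneg_left _ hlognn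
          exact add_le_add_left (mul_le_mul_of_nonneg_right hceil h2nn) _
      _ = (Real.log ℓ * ((ℓ:ℝ)^(1-η) / (ℓ:ℝ)) + Real.log ℓ / ℓ) * (Real.log 2)⁻¹
            + (1-η)⁻¹ := by
          field_simp
      _ = (Real.log ℓ * (ℓ:ℝ)^(-η) + Real.log ℓ / ℓ) * (Real.log 2)⁻¹ + (1-η)⁻¹ := by
          rw [hpow]
  rw [Real.dist_eq, abs_lt]
  constructor
  · linarith
  · linarith


private lemma err_small (δ : ℕ → ℝ) (hδ : Tendsto δ atTop (nhds 0)) :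
    Tendsto (fun ℓ : ℕ => Real.log ℓ / (ℓ:ℝ) * ∑ k ∈ Finset.Icc 2 ℓ, δ k * (Real.log k)⁻¹)
      atTop (nhds 0) := by
  rw [Metric.tendsto_atTop]
  intro ε hε
  obtain ⟨N₀, hN₀⟩ := Metric.tendsto_atTop.mp hδ (ε/4) (by positivity)
  set N := max N₀ 2 with hNdef
  set B : ℝ := ∑ k ∈ Finset.Icc 2 N, |δ k| * (Real.log k)⁻¹ with hBdef
  have hB1 : Tendsto (fun ℓ : ℕ => Real.log ℓ / (ℓ:ℝ) * B) atTop (nhds 0) := by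
    simpa using log_over_self_tendsto.mul_const B
  have e1 : ∀ᶠ ℓ : ℕ in atTop, Real.log ℓ / (ℓ:ℝ) * B < ε/4 :=
    hB1.eventually_lt_const (by positivity)
  have e2 : ∀ᶠ ℓ : ℕ in atTop,
      Real.log ℓ / (ℓ:ℝ) * ∑ k ∈ Finset.Icc 2 ℓ, (Real.log k)⁻¹ < 2 :=
    sum_inv_log_asymp.eventually_lt_const (by norm_num)
  rcases ((e1.and e2).and (eventually_ge_atTop N)).exists_forall_of_atTop with ⟨N₁, hN₁⟩
  refine ⟨N₁, fun ℓ hℓ => ?_⟩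
  obtain ⟨⟨hb, ha⟩, hNℓ⟩ := hN₁ ℓ hℓ
  have hℓ2 : 2 ≤ ℓ := le_trans (le_max_right N₀ 2) hNℓ
  have hℓ2R : (2:ℝ) ≤ (ℓ:ℝ) := by exact_mod_cast hℓ2
  have hlognn : 0 ≤ Real.log ℓ / (ℓ:ℝ) := by
    apply div_nonneg (Real.log_nonneg (by linarith)) (by linarith)
  have hinvnn : ∀ k : ℕ, 2 ≤ k → 0 ≤ (Real.log (k:ℝ))⁻¹ := by
    intro k hk
    have : (2:ℝ) ≤ (k:ℝ) := by exact_mod_cast hk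
    exact inv_nonneg.mpr (Real.log_nonneg (by linarith))
  -- key sum bound
  have hkey : ∑ k ∈ Finset.Icc 2 ℓ, |δ k| * (Real.log k)⁻¹
      ≤ B + (ε/4) * ∑ k ∈ Finset.Icc 2 ℓ, (Real.log k)⁻¹ := by
    have hIcc : ∀ m : ℕ, Finset.Icc 2 m = Finset.Ioc 1 m := fun m => Finset.Icc_add_one_left_eq_Ioc 1 m
    have h1N : 1 ≤ N := by omega
    have hsplit := Finset.sum_Ioc_consecutive
      (fun k : ℕ => |δ k| * (Real.log (k:ℝ))⁻¹) h1N hNℓ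
    rw [hIcc ℓ, ← hsplit, hBdef, hIcc N]
    apply add_le_add_right
    calc ∑ k ∈ Finset.Ioc N ℓ, |δ k| * (Real.log (k:ℝ))⁻¹
        ≤ ∑ k ∈ Finset.Ioc N ℓ, (ε/4) * (Real.log (k:ℝ))⁻¹ := by
          apply Finset.sum_le_sum
          intro k hk
          obtain ⟨hNk, hkℓ⟩ := Finset.mem_Ioc.mp hk
          have hk2 : 2 ≤ k := by omega
          have hδk : |δ k| ≤ ε/4 := by
            have := hN₀ k (by omega)
            rw [Real.dist_eq, sub_zero] at this
            exact this.le
          exact mul_le_mul_of_nonneg_right hδk (hinvnn k hk2)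
      _ ≤ (ε/4) * ∑ k ∈ Finset.Icc 2 ℓ, (Real.log (k:ℝ))⁻¹ := by
          rw [Finset.mul_sum, hIcc ℓ]
          apply Finset.sum_le_sum_of_subset_of_nonneg
          · apply Finset.Ioc_subset_Ioc_left; omega
          · intro k hk _
            obtain ⟨h1k, _⟩ := Finset.mem_Ioc.mp hk
            exact mul_nonneg (by positivity) (hinvnn k (by omega))
  rw [Real.dist_eq, sub_zero]
  have habs : |Real.log ℓ / (ℓ:ℝ) * ∑ k ∈ Finset.Icc 2 ℓ, δ k * (Real.log k)⁻¹|
      ≤ Real.log ℓ / (ℓ:ℝ) * ∑ k ∈ Finset.Icc 2 ℓ, |δ k| * (Real.log k)⁻¹ := by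
    rw [abs_mul, abs_of_nonneg hlognn]
    apply mul_le_mul_of_nonneg_left _ hlognn
    refine (Finset.abs_sum_le_sum_abs _ _).trans (le_of_eq (Finset.sum_congr rfl ?_))
    intro k hk
    obtain ⟨hk2, _⟩ := Finset.mem_Icc.mp hk
    rw [abs_mul, abs_of_nonneg (hinvnn k hk2)]
  calc |Real.log ℓ / (ℓ:ℝ) * ∑ k ∈ Finset.Icc 2 ℓ, δ k * (Real.log k)⁻¹|
      ≤ Real.log ℓ / (ℓ:ℝ) * ∑ k ∈ Finset.Icc 2 ℓ, |δ k| * (Real.log k)⁻¹ := habs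
    _ ≤ Real.log ℓ / (ℓ:ℝ) * (B + (ε/4) * ∑ k ∈ Finset.Icc 2 ℓ, (Real.log k)⁻¹) :=
        mul_le_mul_of_nonneg_left hkey hlognn
    _ = Real.log ℓ / (ℓ:ℝ) * B
        + (ε/4) * (Real.log ℓ / (ℓ:ℝ) * ∑ k ∈ Finset.Icc 2 ℓ, (Real.log k)⁻¹) := by ring
    _ < ε/4 + (ε/4) * 2 := by
        have : (ε/4) * (Real.log ℓ / (ℓ:ℝ) * ∑ k ∈ Finset.Icc 2 ℓ, (Real.log k)⁻¹)
            ≤ (ε/4) * 2 := mul_le_mul_of_nonneg_left ha.le (by positivity)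
        linarith
    _ < ε := by linarith

private lemma cesaro_weighted (a : ℕ → ℝ) (C : ℝ)
    (ha : Tendsto (fun k : ℕ => Real.log k * a k) atTop (nhds C)) :
    Tendsto (fun ℓ : ℕ => Real.log ℓ / (ℓ:ℝ) * ∑ k ∈ Finset.Icc 2 ℓ, a k) atTop (nhds C) := by
  have hsplit : ∀ ℓ : ℕ, ∑ k ∈ Finset.Icc 2 ℓ, a k
      = C * ∑ k ∈ Finset.Icc 2 ℓ, (Real.log k)⁻¹
        + ∑ k ∈ Finset.Icc 2 ℓ, (Real.log k * a k - C) * (Real.log k)⁻¹ := by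
    intro ℓ
    rw [Finset.mul_sum, ← Finset.sum_add_distrib]
    apply Finset.sum_congr rfl
    intro k hk
    obtain ⟨hk2, _⟩ := Finset.mem_Icc.mp hk
    have hk2R : (2:ℝ) ≤ (k:ℝ) := by exact_mod_cast hk2
    have hlog : Real.log k ≠ 0 := ne_of_gt (Real.log_pos (by linarith))
    field_simp
    ring
  have h1 : Tendsto (fun ℓ : ℕ => C * (Real.log ℓ / (ℓ:ℝ) * ∑ k ∈ Finset.Icc 2 ℓ, (Real.log k)⁻¹)
      + Real.log ℓ / (ℓ:ℝ) * ∑ k ∈ Finset.Icc 2 ℓ, (Real.log k * a k - C) * (Real.log k)⁻¹)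
      atTop (nhds (C * 1 + 0)) := by
    exact (sum_inv_log_asymp.const_mul C).add
      (err_small (fun k => Real.log k * a k - C) (by simpa using ha.sub_const C))
  have h2 : (C : ℝ) * 1 + 0 = C := by ring
  rw [h2] at h1
  refine h1.congr fun ℓ => ?_
  rw [hsplit ℓ]
  ring

private lemma cont_rpow_affine {u : ℝ} (hu : 0 < u) (p q : ℝ) :
    Continuous fun t : ℝ => u ^ (p * t + q) := by
  refine Continuous.congr ?_ fun t => (Real.rpow_def_of_pos hu _).symm
  exact Real.continuous_exp.comp
    (continuous_const.mul ((continuous_const.mul continuous_id).add continuous_const))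

private lemma hasDerivAt_rpow_affine {u : ℝ} (hu : 0 < u) (p q x : ℝ) :
    HasDerivAt (fun t : ℝ => u ^ (p * t + q)) (u ^ (p * x + q) * Real.log u * p) x := by
  have h1 : HasDerivAt (fun t : ℝ => p * t + q) p x := by
    simpa using ((hasDerivAt_id x).const_mul p).add_const q
  have h2 := (Real.hasStrictDerivAt_const_rpow hu (p * x + q)).hasDerivAt
  exact h2.comp x h1

private lemma integral_rpow_affine {u : ℝ} (hu : 0 < u) (hu1 : u < 1) (p q a b : ℝ)
    (hp : p ≠ 0) :
    ∫ t in a..b, u ^ (p * t + q)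
      = (u ^ (p * b + q) - u ^ (p * a + q)) / (p * Real.log u) := by
  have hlog : Real.log u ≠ 0 := ne_of_lt (Real.log_neg hu hu1)
  have hd : ∀ x ∈ Set.uIcc a b,
      HasDerivAt (fun t : ℝ => u ^ (p * t + q) / (p * Real.log u)) (u ^ (p * x + q)) x := by
    intro x _
    have := (hasDerivAt_rpow_affine hu p q x).div_const (p * Real.log u)
    refine this.congr_deriv ?_
    rw [div_eq_iff (mul_ne_zero hp hlog)]
    ring
  rw [intervalIntegral.integral_eq_sub_of_hasDerivAt hd
    ((cont_rpow_affine hu p q).intervalIntegrable a b)]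
  rw [div_sub_div_same]

private lemma ratio_tendsto {α : ℝ} (hα : 0 < α) (d : ℕ → ℝ) (D : ℝ) (hD : 0 < D)
    (hd : Tendsto d atTop (nhds D)) :
    Tendsto (fun k : ℕ => Real.log k / Real.log (d k * (k:ℝ) ^ (-(1/α)))) atTop (nhds (-α)) := by
  have hdpos : ∀ᶠ k : ℕ in atTop, 0 < d k := hd.eventually_const_lt hD
  have hlogk : Tendsto (fun k : ℕ => Real.log k) atTop atTop :=
    Real.tendsto_log_atTop.comp tendsto_natCast_atTop_atTop
  have hs : Tendsto (fun k : ℕ => Real.log (d k)) atTop (nhds (Real.log D)) :=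
    ((Real.continuousAt_log hD.ne').tendsto).comp hd
  have hmain : Tendsto (fun k : ℕ => Real.log (d k) / Real.log k + (-(1/α)))
      atTop (nhds (0 + -(1/α))) := (hs.div_atTop hlogk).add tendsto_const_nhds
  have hne : (0:ℝ) + -(1/α) ≠ 0 := by
    simp only [zero_add, ne_eq, neg_eq_zero, one_div, inv_eq_zero]
    exact hα.ne'
  have hinv := hmain.inv₀ hne
  have hval : ((0:ℝ) + -(1/α))⁻¹ = -α := by
    rw [zero_add]
    field_simp
  rw [hval] at hinv
  refine hinv.congr' ?_
  filter_upwards [hdpos, eventually_ge_atTop 2] with k hdk hk2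
  have hk2R : (2:ℝ) ≤ (k:ℝ) := by exact_mod_cast hk2
  have hkpos : (0:ℝ) < (k:ℝ) := by linarith
  have ht : Real.log k ≠ 0 := ne_of_gt (Real.log_pos (by linarith))
  rw [Real.log_mul hdk.ne' (by positivity), Real.log_rpow hkpos,
    div_add' _ _ _ ht, inv_div]

private lemma integral_rpow_sub {u : ℝ} (hu0 : 0 < u) (hu1 : u < 1) (a b : ℝ) :
    ∫ t in a..b, u ^ (t - a) = (u ^ (b - a) - 1) / Real.log u := by
  have h := integral_rpow_affine hu0 hu1 1 (-a) a b one_ne_zero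
  simp only [one_mul] at h
  simp_rw [sub_eq_add_neg]
  rw [h]
  simp only [add_neg_cancel, Real.rpow_zero]
  ring

private lemma integral_rpow_two_sub {u : ℝ} (hu0 : 0 < u) (hu1 : u < 1) (a b d : ℝ) :
    ∫ t in a..b, u ^ (2*t - d) = (u ^ (2*b - d) - u ^ (2*a - d)) / (2 * Real.log u) := by
  have h := integral_rpow_affine hu0 hu1 2 (-d) a b two_ne_zero
  simp_rw [sub_eq_add_neg]
  exact h

/-- Asymptotics of expectations for the uniform distribution on `[α₀, α₁]`: with
`E k = (1/(α₁-α₀)) ∫_{α₀}^{α₁} [α₀ 2^α₀ (2 c_k k^{-1/α₀})^{t-α₀}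
  - ((1+α₀)/2) α₀ 2^α₀ (2 c'_k k^{-1/α₁})^{2t-α₀}] dt`,
one has `((log ℓ)/ℓ) ∑_{k=2}^ℓ E k → α₀² 2^α₀ / (α₁ - α₀)`. -/
theorem uniform_expectation_asymptotics (α₀ α₁ : ℝ)
    (h0 : 0 < α₀) (h01 : α₀ < α₁) (h1 : α₁ < 1)
    (c c' : ℕ → ℝ) (hc : ∀ k, 2 ≤ k → 0 < c k) (hc' : ∀ k, 2 ≤ k → 0 < c' k)
    (L L' : ℝ) (hL : 0 < L) (hL' : 0 < L')
    (hclim : Tendsto c atTop (nhds L)) (hc'lim : Tendsto c' atTop (nhds L'))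
    (E : ℕ → ℝ)
    (hE : ∀ k, 2 ≤ k → E k = (1 / (α₁ - α₀)) *
      ∫ t in α₀..α₁,
        (α₀ * 2 ^ α₀ * (2 * c k * (k : ℝ) ^ (-(1 / α₀))) ^ (t - α₀) -
          ((1 + α₀) / 2) * (α₀ * 2 ^ α₀) *
            (2 * c' k * (k : ℝ) ^ (-(1 / α₁))) ^ (2 * t - α₀))) :
    Tendsto (fun ℓ : ℕ => (Real.log ℓ / (ℓ : ℝ)) * ∑ k ∈ Finset.Icc 2 ℓ, E k)
      atTop (nhds (α₀ ^ 2 * 2 ^ α₀ / (α₁ - α₀))) := by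
  have hα₁ : 0 < α₁ := lt_trans h0 h01
  -- limits of the normalized preimage coordinates
  have hpow0 : Tendsto (fun k : ℕ => (k:ℝ) ^ (-(1/α₀))) atTop (nhds 0) :=
    (tendsto_rpow_neg_atTop (by positivity)).comp tendsto_natCast_atTop_atTop
  have hpow0' : Tendsto (fun k : ℕ => (k:ℝ) ^ (-(1/α₁))) atTop (nhds 0) :=
    (tendsto_rpow_neg_atTop (by positivity)).comp tendsto_natCast_atTop_atTop
  have hu0 : Tendsto (fun k : ℕ => 2 * c k * (k:ℝ) ^ (-(1/α₀))) atTop (nhds 0) := by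
    simpa using (hclim.const_mul 2).mul hpow0
  have hv0 : Tendsto (fun k : ℕ => 2 * c' k * (k:ℝ) ^ (-(1/α₁))) atTop (nhds 0) := by
    simpa using (hc'lim.const_mul 2).mul hpow0'
  -- limits of the rpow factors
  have hXlim : Tendsto (fun k : ℕ => (2 * c k * (k:ℝ) ^ (-(1/α₀))) ^ (α₁ - α₀))
      atTop (nhds 0) := by
    have hcont := (Real.continuousAt_rpow_const 0 (α₁ - α₀)
      (Or.inr (by linarith : (0:ℝ) ≤ α₁ - α₀))).tendsto
    have := hcont.comp hu0
    simpa [Function.comp_def, Real.zero_rpow (ne_of_gt (by linarith : (0:ℝ) < α₁ - α₀))] using this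
  have hYlim : Tendsto (fun k : ℕ => (2 * c' k * (k:ℝ) ^ (-(1/α₁))) ^ (2*α₁ - α₀))
      atTop (nhds 0) := by
    have hcont := (Real.continuousAt_rpow_const 0 (2*α₁ - α₀)
      (Or.inr (by linarith : (0:ℝ) ≤ 2*α₁ - α₀))).tendsto
    have := hcont.comp hv0
    simpa [Function.comp_def, Real.zero_rpow (ne_of_gt (by linarith : (0:ℝ) < 2*α₁ - α₀))] using this
  have hZlim : Tendsto (fun k : ℕ => (2 * c' k * (k:ℝ) ^ (-(1/α₁))) ^ α₀)
      atTop (nhds 0) := by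
    have hcont := (Real.continuousAt_rpow_const 0 α₀ (Or.inr h0.le)).tendsto
    have := hcont.comp hv0
    simpa [Function.comp_def, Real.zero_rpow h0.ne'] using this
  -- limits of the log ratios
  have hR : Tendsto (fun k : ℕ => Real.log k / Real.log (2 * c k * (k:ℝ) ^ (-(1/α₀))))
      atTop (nhds (-α₀)) :=
    ratio_tendsto h0 (fun k => 2 * c k) (2*L) (by positivity) (hclim.const_mul 2)
  have hS : Tendsto (fun k : ℕ => Real.log k / Real.log (2 * c' k * (k:ℝ) ^ (-(1/α₁))))
      atTop (nhds (-α₁)) :=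
    ratio_tendsto hα₁ (fun k => 2 * c' k) (2*L') (by positivity) (hc'lim.const_mul 2)
  -- the rescaled expectations converge
  have hC : Tendsto (fun k : ℕ => Real.log k * E k) atTop
      (nhds (α₀ ^ 2 * 2 ^ α₀ / (α₁ - α₀))) := by
    have tA := ((hXlim.sub_const 1).const_mul (α₀ * 2 ^ α₀)).mul hR
    have tB := ((hYlim.sub hZlim).const_mul ((1 + α₀)/2 * (α₀ * 2 ^ α₀))).mul
      (hS.const_mul (1/2))
    have hφ := (tA.sub tB).const_mul (1/(α₁ - α₀))
    have hval : (1/(α₁ - α₀)) * (α₀ * 2 ^ α₀ * ((0:ℝ) - 1) * (-α₀)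
        - (1 + α₀)/2 * (α₀ * 2 ^ α₀) * ((0:ℝ) - 0) * ((1/2) * (-α₁)))
        = α₀ ^ 2 * 2 ^ α₀ / (α₁ - α₀) := by ring
    rw [hval] at hφ
    refine hφ.congr' ?_
    filter_upwards [hu0.eventually_lt_const one_pos, hv0.eventually_lt_const one_pos,
      eventually_ge_atTop 2] with k hu1 hv1 hk2
    have hkR : (0:ℝ) < (k:ℝ) := by
      have : (2:ℝ) ≤ (k:ℝ) := by exact_mod_cast hk2
      linarith
    rw [hE k hk2]
    set u := 2 * c k * (k:ℝ) ^ (-(1/α₀)) with hudef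
    set v := 2 * c' k * (k:ℝ) ^ (-(1/α₁)) with hvdef
    have hupos : 0 < u := by
      rw [hudef]
      have := hc k hk2
      positivity
    have hvpos : 0 < v := by
      rw [hvdef]
      have := hc' k hk2
      positivity
    have hi1 : IntervalIntegrable (fun t : ℝ => α₀ * 2 ^ α₀ * u ^ (t - α₀))
        MeasureTheory.volume α₀ α₁ := by
      apply Continuous.intervalIntegrable
      exact continuous_const.mul ((cont_rpow_affine hupos 1 (-α₀)).congr
        fun t => by rw [one_mul, ← sub_eq_add_neg])
    have hi2 : IntervalIntegrable (fun t : ℝ => (1 + α₀)/2 * (α₀ * 2 ^ α₀) * v ^ (2*t - α₀))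
        MeasureTheory.volume α₀ α₁ := by
      apply Continuous.intervalIntegrable
      exact continuous_const.mul ((cont_rpow_affine hvpos 2 (-α₀)).congr
        fun t => by rw [← sub_eq_add_neg])
    rw [intervalIntegral.integral_sub hi1 hi2, intervalIntegral.integral_const_mul,
      intervalIntegral.integral_const_mul, integral_rpow_sub hupos hu1 α₀ α₁,
      integral_rpow_two_sub hvpos hv1 α₀ α₁ α₀,
      show 2*α₀ - α₀ = α₀ by ring]
    ring
  exact cesaro_weighted E _ hC
end
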